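/- For a finite set S of points in ℝ², let r(S) = inf { ρ ≥ 0 | there exists c ∈ ℝ² with dist(c, x) ≤ ρ for all x ∈ S } be the radius of the minimum enclosing circle of S. Then for any four points p₁, p₂, p₃, p₄ ∈ ℝ², r({p₁, p₂, p₃, p₄}) equals the maximum over i ∈ {1,2,3,4} of r of the three-element subset obtained by omitting pᵢ, i.e. r({p₁,p₂,p₃,p₄}) = max( r({p₂,p₃,p₄}), r({p₁,p₃,p₄}), r({p₁,p₂,p₄}), r({p₁,p₂,p₃}) ). -/

import Mathlib

open Metric

/-- The radius of the minimum enclosing circle of a set of points in the plane: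
the infimum of radii `ρ ≥ 0` of closed disks containing all points of `S`. -/
noncomputable def minEnclosingRadius (S : Set (EuclideanSpace ℝ (Fin 2))) : ℝ :=
  sInf {ρ : ℝ | 0 ≤ ρ ∧ ∃ c : EuclideanSpace ℝ (Fin 2), ∀ x ∈ S, dist c x ≤ ρ}

lemma encSet_bddBelow (S : Set (EuclideanSpace ℝ (Fin 2))) :
    BddBelow {ρ : ℝ | 0 ≤ ρ ∧ ∃ c : EuclideanSpace ℝ (Fin 2), ∀ x ∈ S, dist c x ≤ ρ} :=
  ⟨0, fun _ hρ => hρ.1⟩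

lemma encSet_nonempty {S : Set (EuclideanSpace ℝ (Fin 2))} (hS : S.Finite) :
    ({ρ : ℝ | 0 ≤ ρ ∧ ∃ c : EuclideanSpace ℝ (Fin 2), ∀ x ∈ S, dist c x ≤ ρ}).Nonempty := by
  obtain ⟨r, hr⟩ := hS.isBounded.subset_closedBall 0
  refine ⟨max r 0, le_max_right _ _, 0, fun x hx => ?_⟩
  have := hr hx
  rw [mem_closedBall] at this
  rw [dist_comm]
  exact this.trans (le_max_left _ _)

lemma enc_nonneg {S : Set (EuclideanSpace ℝ (Fin 2))} (hS : S.Finite) :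
    0 ≤ minEnclosingRadius S :=
  le_csInf (encSet_nonempty hS) fun _ hρ => hρ.1

lemma enc_mono {S T : Set (EuclideanSpace ℝ (Fin 2))} (hST : S ⊆ T) (hT : T.Finite) :
    minEnclosingRadius S ≤ minEnclosingRadius T :=
  csInf_le_csInf (encSet_bddBelow S) (encSet_nonempty hT)
    (fun ρ hρ => ⟨hρ.1, hρ.2.choose, fun x hx => hρ.2.choose_spec x (hST hx)⟩)

theorem minEnclosingRadius_four_points (p₁ p₂ p₃ p₄ : EuclideanSpace ℝ (Fin 2)) :
    minEnclosingRadius {p₁, p₂, p₃, p₄} =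
      max (max (minEnclosingRadius {p₂, p₃, p₄}) (minEnclosingRadius {p₁, p₃, p₄}))
        (max (minEnclosingRadius {p₁, p₂, p₄}) (minEnclosingRadius {p₁, p₂, p₃})) := by
  apply le_antisymm
  · set M := max (max (minEnclosingRadius {p₂, p₃, p₄}) (minEnclosingRadius {p₁, p₃, p₄}))
        (max (minEnclosingRadius {p₁, p₂, p₄}) (minEnclosingRadius {p₁, p₂, p₃})) with hMdef
    have hM0 : 0 ≤ M :=
      le_trans (enc_nonneg (Set.toFinite _)) (le_trans (le_max_left _ _) (le_max_left _ _))
    refine le_of_forall_pos_le_add ?_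
    intro ε hε
    have key : ∀ (S : Set (EuclideanSpace ℝ (Fin 2))), S.Finite → minEnclosingRadius S ≤ M →
        ∃ c, ∀ x ∈ S, dist c x ≤ M + ε := by
      intro S hS hle
      have hlt : minEnclosingRadius S < M + ε := lt_of_le_of_lt hle (by linarith)
      obtain ⟨ρ, ⟨h0, c, hc⟩, hρ⟩ := exists_lt_of_csInf_lt (encSet_nonempty hS) hlt
      exact ⟨c, fun x hx => (hc x hx).trans hρ.le⟩
    obtain ⟨c₁, h₁⟩ := key {p₂, p₃, p₄} (Set.toFinite _)
      (le_trans (le_max_left _ _) (le_max_left _ _))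
    obtain ⟨c₂, h₂⟩ := key {p₁, p₃, p₄} (Set.toFinite _)
      (le_trans (le_max_right _ _) (le_max_left _ _))
    obtain ⟨c₃, h₃⟩ := key {p₁, p₂, p₄} (Set.toFinite _)
      (le_trans (le_max_left _ _) (le_max_right _ _))
    obtain ⟨c₄, h₄⟩ := key {p₁, p₂, p₃} (Set.toFinite _)
      (le_trans (le_max_right _ _) (le_max_right _ _))
    set p : Fin 4 → EuclideanSpace ℝ (Fin 2) := ![p₁, p₂, p₃, p₄] with hp
    set c : Fin 4 → EuclideanSpace ℝ (Fin 2) := ![c₁, c₂, c₃, c₄] with hc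
    have hcov : ∀ i j : Fin 4, j ≠ i → dist (c i) (p j) ≤ M + ε := by
      intro i j hij
      fin_cases i <;> fin_cases j <;>
        simp [p, c] at hij ⊢ <;>
        first
          | with_reducible exact h₁ _ (by simp)
          | with_reducible exact h₂ _ (by simp)
          | with_reducible exact h₃ _ (by simp)
          | with_reducible exact h₄ _ (by simp)
    have hrank : Module.finrank ℝ (EuclideanSpace ℝ (Fin 2)) = 2 := by
      simp [finrank_euclideanSpace]
    have hinter : (⋂ j ∈ (Finset.univ : Finset (Fin 4)),
        closedBall (p j) (M + ε)).Nonempty := by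
      apply Convex.helly_theorem' (𝕜 := ℝ)
      · intro i _
        exact convex_closedBall _ _
      · intro I _ hcard
        rw [hrank] at hcard
        have hex : ∃ i, i ∉ I := by
          by_contra h
          push_neg at h
          have : I = Finset.univ := Finset.eq_univ_iff_forall.mpr h
          simp [this, Finset.card_univ] at hcard
        obtain ⟨i, hi⟩ := hex
        refine ⟨c i, ?_⟩
        rw [Set.mem_iInter₂]
        intro j hj
        rw [mem_closedBall]
        exact hcov i j (fun h => hi (h ▸ hj))
    obtain ⟨c₀, hc₀⟩ := hinter
    rw [Set.mem_iInter₂] at hc₀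
    have hmem : M + ε ∈ {ρ : ℝ | 0 ≤ ρ ∧
        ∃ c : EuclideanSpace ℝ (Fin 2), ∀ x ∈ ({p₁, p₂, p₃, p₄} :
          Set (EuclideanSpace ℝ (Fin 2))), dist c x ≤ ρ} := by
      refine ⟨by linarith, c₀, ?_⟩
      rintro x (rfl | rfl | rfl | rfl)
      · exact hc₀ 0 (Finset.mem_univ _)
      · exact hc₀ 1 (Finset.mem_univ _)
      · exact hc₀ 2 (Finset.mem_univ _)
      · exact hc₀ 3 (Finset.mem_univ _)
    exact csInf_le (encSet_bddBelow _) hmem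
  · have hfin : ({p₁, p₂, p₃, p₄} : Set (EuclideanSpace ℝ (Fin 2))).Finite := Set.toFinite _
    apply max_le <;> apply max_le <;>
      refine enc_mono ?_ hfin <;> intro x hx <;> simp at hx ⊢ <;> tauto
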